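/- Let G be a connected graph of order at least three and let f = (B₀, B₁, B₂) be a total strong Roman dominating function of minimum weight, where B₀, B₁ are the sets of vertices labeled 0 and 1 and B₂ the set of vertices labeled at least 2. Then |B₂| ≤ |B₀|, and moreover no leaf of G lies in B₂ and no support vertex of G lies in B₀. -/
import Mathlib


open Finset

variable {V : Type*} [Fintype V]

/-- The degree of a vertex. -/
noncomputable def degN (G : SimpleGraph V) (v : V) : ℕ := {u | G.Adj v u}.ncard

/-- Maximum degree. -/
noncomputable def maxDeg (G : SimpleGraph V) : ℕ := Finset.univ.sup (degN G)

/-- Minimum degree. -/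
noncomputable def minDeg (G : SimpleGraph V) : ℕ := sInf {d | ∃ v, degN G v = d}

/-- No isolated vertex. -/
def NoIsolated (G : SimpleGraph V) : Prop := ∀ v, ∃ u, G.Adj v u

/-- Total strong Roman dominating function. `(Δ+1)/2 = ⌈Δ/2⌉` and
`(m+1)/2 = ⌈m/2⌉` in natural-number arithmetic. -/
def IsTSRDF (G : SimpleGraph V) (f : V → ℕ) : Prop :=
  (∀ v, f v ≤ (maxDeg G + 1) / 2 + 1) ∧
  (∀ v, f v = 0 → ∃ u, G.Adj v u ∧
      1 + ({w | G.Adj u w ∧ f w = 0}.ncard + 1) / 2 ≤ f u) ∧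
  (∀ v, 0 < f v → ∃ u, G.Adj v u ∧ 0 < f u)

/-- The total strong Roman domination number. -/
noncomputable def tsrd (G : SimpleGraph V) : ℕ :=
  sInf {k | ∃ f : V → ℕ, IsTSRDF G f ∧ ∑ v, f v = k}

lemma noIso (G : SimpleGraph V) (hc : G.Connected) (hn : 3 ≤ Fintype.card V) :
    NoIsolated G := by
  intro v
  have h2 : 1 < Fintype.card V := by omega
  obtain ⟨u, hu⟩ := Fintype.exists_ne_of_one_lt_card h2 v
  obtain ⟨p⟩ := hc.preconnected v u
  cases p with
  | nil => exact absurd rfl hu.symm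
  | cons h _ => exact ⟨_, h⟩

lemma leaf_nbr (G : SimpleGraph V) (x y : V) (hdeg : degN G x = 1)
    (hadj : G.Adj x y) : ∀ u, G.Adj x u → u = y := by
  rw [degN, Set.ncard_eq_one] at hdeg
  obtain ⟨z, hz⟩ := hdeg
  have hy : y = z := by
    have : y ∈ ({z} : Set V) := hz ▸ hadj
    simpa using this
  intro u hu
  have : u ∈ ({z} : Set V) := hz ▸ hu
  simp only [Set.mem_singleton_iff] at this
  exact this.trans hy.symm

lemma one_tsrdf (G : SimpleGraph V) (h : NoIsolated G) :
    IsTSRDF G (fun _ => 1) := by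
  refine ⟨fun v => Nat.le_add_left 1 _, fun v hv => by simp at hv, fun v _ => ?_⟩
  obtain ⟨u, hu⟩ := h v
  exact ⟨u, hu, one_pos⟩

theorem stmt2 (G : SimpleGraph V) (hc : G.Connected) (hn : 3 ≤ Fintype.card V)
    (f : V → ℕ) (hf : IsTSRDF G f) (hmin : ∑ v, f v = tsrd G) :
    {v | 2 ≤ f v}.ncard ≤ {v | f v = 0}.ncard ∧
    (∀ x, degN G x = 1 → f x < 2) ∧
    (∀ y, (∃ x, G.Adj y x ∧ degN G x = 1) → f y ≠ 0) := by
  classical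
  have hnois : NoIsolated G := noIso G hc hn
  -- tsrd G ≤ Fintype.card V
  have htle : tsrd G ≤ Fintype.card V := by
    apply Nat.sInf_le
    exact ⟨fun _ => 1, one_tsrdf G hnois, by simp⟩
  refine ⟨?_, ?_, ?_⟩
  · -- |B₂| ≤ |B₀|
    set S0 : Finset V := univ.filter (fun v => f v = 0) with hS0
    set S1 : Finset V := univ.filter (fun v => f v = 1) with hS1
    set S2 : Finset V := univ.filter (fun v => 2 ≤ f v) with hS2
    have h0 : {v | f v = 0}.ncard = S0.card := by
      rw [← Set.ncard_coe_finset]; congr 1; ext v; simp [hS0]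
    have h2 : {v | 2 ≤ f v}.ncard = S2.card := by
      rw [← Set.ncard_coe_finset]; congr 1; ext v; simp [hS2]
    rw [h0, h2]
    -- partition of univ
    have hdisj : Disjoint S1 S2 := by
      rw [Finset.disjoint_left]
      intro a ha ha2
      simp [hS1] at ha; simp [hS2] at ha2; omega
    have h12 : S1 ∪ S2 = univ.filter (fun v => ¬ f v = 0) := by
      ext v; simp [hS1, hS2]; omega
    have hpart : S0.card + (S1.card + S2.card) = Fintype.card V := by
      rw [← Finset.card_union_of_disjoint hdisj, h12]
      rw [Finset.card_filter_add_card_filter_not]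
      exact Finset.card_univ
    -- lower bound on sum
    have hsum1 : S1.card + 2 * S2.card ≤ ∑ v ∈ S1 ∪ S2, f v := by
      rw [Finset.sum_union hdisj]
      have e1 : ∑ v ∈ S1, f v = S1.card := by
        rw [Finset.sum_congr rfl (fun v hv => by simp [hS1] at hv; exact hv)]
        simp
      have e2 : 2 * S2.card ≤ ∑ v ∈ S2, f v := by
        calc 2 * S2.card = ∑ _v ∈ S2, 2 := by rw [Finset.sum_const]; ring
          _ ≤ ∑ v ∈ S2, f v := Finset.sum_le_sum (fun v hv => by
              simp [hS2] at hv; exact hv)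
      omega
    have hsum2 : ∑ v ∈ S1 ∪ S2, f v ≤ ∑ v, f v :=
      Finset.sum_le_sum_of_subset (Finset.subset_univ _)
    omega
  · -- no leaf has value ≥ 2
    intro x hdeg
    by_contra hcon
    push_neg at hcon
    obtain ⟨y, hxy, hfy⟩ := hf.2.2 x (by omega)
    have huniq := leaf_nbr G x y hdeg hxy
    set g : V → ℕ := Function.update f x 1 with hg
    have hgx : g x = 1 := Function.update_self x 1 f
    have hgne : ∀ w, w ≠ x → g w = f w := fun w hw => Function.update_of_ne hw 1 f
    have hzero : ∀ w, (g w = 0 ↔ f w = 0) := by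
      intro w
      by_cases hw : w = x
      · subst hw; rw [hgx]; omega
      · rw [hgne w hw]
    have hyx : y ≠ x := hxy.ne'
    have hgtsrdf : IsTSRDF G g := by
      refine ⟨?_, ?_, ?_⟩
      · intro v
        by_cases hv : v = x
        · subst hv; rw [hgx]; omega
        · rw [hgne v hv]; exact hf.1 v
      · intro v hv
        have hfv : f v = 0 := (hzero v).mp hv
        obtain ⟨u, hadj, hle⟩ := hf.2.1 v hfv
        refine ⟨u, hadj, ?_⟩
        have hux : u ≠ x := by
          rintro rfl
          have hvy : v = y := huniq v hadj.symm
          subst hvy; omega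
        have hset : {w | G.Adj u w ∧ g w = 0} = {w | G.Adj u w ∧ f w = 0} := by
          ext w; simp [hzero w]
        rw [hset, hgne u hux]
        exact hle
      · intro v hv
        by_cases hvx : v = x
        · subst hvx
          exact ⟨y, hxy, by rw [hgne y hyx]; exact hfy⟩
        · have hfv : 0 < f v := by rw [hgne v hvx] at hv; exact hv
          obtain ⟨u, hadj, hu⟩ := hf.2.2 v hfv
          refine ⟨u, hadj, ?_⟩
          by_cases hux : u = x
          · subst hux; rw [hgx]; omega
          · rw [hgne u hux]; exact hu
    have hle : tsrd G ≤ ∑ v, g v := Nat.sInf_le ⟨g, hgtsrdf, rfl⟩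
    have hsg : ∑ v, g v = 1 + ∑ v ∈ univ \ {x}, f v := by
      rw [hg, Finset.sum_update_of_mem (Finset.mem_univ x)]
    have hsf : ∑ v, f v = ∑ v ∈ univ \ {x}, f v + f x :=
      Finset.sum_eq_sum_sdiff_singleton_add (Finset.mem_univ x) f
    omega
  · -- support vertices are not 0
    rintro y ⟨x, hadj, hdeg⟩ hy0
    have huniq := leaf_nbr G x y hdeg hadj.symm
    rcases Nat.eq_zero_or_pos (f x) with hx0 | hxpos
    · obtain ⟨u, hxu, hle⟩ := hf.2.1 x hx0
      rw [huniq u hxu, hy0] at hle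
      omega
    · obtain ⟨u, hxu, hu⟩ := hf.2.2 x hxpos
      rw [huniq u hxu, hy0] at hu
      omega
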